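/- For every θ > 0 and every q ≥ 0, the tail first-moment integral of the i-Garima distribution satisfies ∫_q^∞ x · (θ/(θ+3))·(2+θ+θx)·e^{-θx} dx = (θ²q² + (θ²+4θ)q + (θ+4))·e^{-θq} / (θ(θ+3)); equivalently, the Lorenz curve value is L(p) = 1 − (θ²q² + (θ²+4θ)q + (θ+4))·e^{-θq}/(θ+4) with q = G^{-1}(p) and mean μ = (θ+4)/(θ(θ+3)). -/

import Mathlib

open MeasureTheory Filter Real Set Topology

theorem iGarima_tail_moment_and_lorenz (θ : ℝ) (hθ : 0 < θ) (q : ℝ) (hq : 0 ≤ q) :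
    (∫ x in Set.Ioi q, x * ((θ / (θ + 3)) * (2 + θ + θ * x) * Real.exp (-θ * x))
        = (θ ^ 2 * q ^ 2 + (θ ^ 2 + 4 * θ) * q + (θ + 4)) * Real.exp (-θ * q)
            / (θ * (θ + 3)))
      ∧ (1 / ((θ + 4) / (θ * (θ + 3))))
            * ∫ x in (0 : ℝ)..q, x * ((θ / (θ + 3)) * (2 + θ + θ * x) * Real.exp (-θ * x))
          = 1 - (θ ^ 2 * q ^ 2 + (θ ^ 2 + 4 * θ) * q + (θ + 4)) * Real.exp (-θ * q)
                / (θ + 4) := by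
  have h3 : (0:ℝ) < θ + 3 := by linarith
  have h4 : (0:ℝ) < θ + 4 := by linarith
  have hθ0 : θ ≠ 0 := ne_of_gt hθ
  have h30 : θ + 3 ≠ 0 := ne_of_gt h3
  have h40 : θ + 4 ≠ 0 := ne_of_gt h4
  set F : ℝ → ℝ := fun x =>
    -((θ ^ 2 * x ^ 2 + (θ ^ 2 + 4 * θ) * x + (θ + 4)) * Real.exp (-θ * x)) / (θ * (θ + 3))
    with hF
  have hderiv : ∀ x : ℝ, HasDerivAt F
      (x * ((θ / (θ + 3)) * (2 + θ + θ * x) * Real.exp (-θ * x))) x := by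
    intro x
    have h1 : HasDerivAt (fun x : ℝ => θ ^ 2 * x ^ 2 + (θ ^ 2 + 4 * θ) * x + (θ + 4))
        (2 * θ ^ 2 * x + (θ ^ 2 + 4 * θ)) x := by
      have := (((hasDerivAt_pow 2 x).const_mul (θ ^ 2)).add
        (((hasDerivAt_id x).const_mul (θ ^ 2 + 4 * θ)).add_const (θ + 4)))
      convert this using 1
      · rfl
      · rfl
      · funext y; simp only [Pi.add_apply, id_eq]; ring
      · norm_num; ring
    have h2 : HasDerivAt (fun x : ℝ => Real.exp (-θ * x)) (Real.exp (-θ * x) * -θ) x := by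
      have h := ((hasDerivAt_id x).const_mul (-θ)).exp
      simp only [id_eq, mul_one] at h
      exact h
    have := ((h1.mul h2).neg).div_const (θ * (θ + 3))
    convert this using 1
    · rfl
    · rfl
    · rfl
    field_simp
    ring
  have key : ∀ n : ℕ, Tendsto (fun x : ℝ => x ^ n * Real.exp (-θ * x)) atTop (𝓝 0) := by
    intro n
    have h := (tendsto_pow_mul_exp_neg_atTop_nhds_zero n).comp
      (tendsto_id.const_mul_atTop hθ)
    have h' := h.const_mul ((1:ℝ) / θ ^ n)
    rw [mul_zero] at h'
    refine h'.congr (fun x => ?_)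
    simp only [Function.comp, id_eq]
    rw [show -(θ * x) = -θ * x by ring]
    field_simp
    ring
  have htend : Tendsto F atTop (𝓝 0) := by
    have h2 := key 2
    have h1 := key 1
    have h0 := key 0
    have := (((h2.const_mul (θ ^ 2)).add (h1.const_mul (θ ^ 2 + 4 * θ))).add
      (h0.const_mul (θ + 4))).neg.div_const (θ * (θ + 3))
    simp only [mul_zero, add_zero, neg_zero, zero_div] at this
    refine this.congr (fun x => ?_)
    simp only [hF, pow_one, pow_zero, one_mul]
    ring
  have hnonneg : ∀ x ∈ Ioi q, 0 ≤ x * ((θ / (θ + 3)) * (2 + θ + θ * x) * Real.exp (-θ * x)) := by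
    intro x hx
    have hx0 : 0 ≤ x := le_trans hq (le_of_lt hx)
    have : 0 ≤ 2 + θ + θ * x := by positivity
    positivity
  have htail : ∫ x in Set.Ioi q, x * ((θ / (θ + 3)) * (2 + θ + θ * x) * Real.exp (-θ * x))
      = (θ ^ 2 * q ^ 2 + (θ ^ 2 + 4 * θ) * q + (θ + 4)) * Real.exp (-θ * q) / (θ * (θ + 3)) := by
    rw [integral_Ioi_of_hasDerivAt_of_nonneg' (fun x _ => hderiv x) hnonneg htend]
    simp only [hF]
    ring
  refine ⟨htail, ?_⟩
  have hint : ∫ x in (0:ℝ)..q, x * ((θ / (θ + 3)) * (2 + θ + θ * x) * Real.exp (-θ * x))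
      = F q - F 0 := by
    apply intervalIntegral.integral_eq_sub_of_hasDerivAt (fun x _ => hderiv x)
    apply Continuous.intervalIntegrable
    continuity
  rw [hint]
  simp only [hF]
  have e0 : Real.exp (-θ * 0) = 1 := by norm_num
  rw [e0]
  field_simp
  ring
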